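/- arXiv:2412.16580 — 3 statements merged into one kernel-verified Lean document; each statement's English description precedes it below -/
import Mathlib

section
/- Let (a_k)_{k≥1} be a real sequence with |a_k| ≤ C ρ^k for some C > 0 and ρ ∈ (0,1), normalized so that ∑_{k≥1} a_k = 1. Let f ∈ C^3(ℝ,ℝ) with bounded third derivative. Then there exists a constant C' > 0 such that for all h ∈ (0,1), the infinite-range discrete Laplacian Δ_{a,h} f := ∑_{k≥1} a_k (f(·+kh) - 2f + f(·-kh))/(k²h²) satisfies ‖Δ_{a,h} f - f''‖_{L^∞} ≤ C' h. -/
open Real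


theorem second_diff_bound (f : ℝ → ℝ) (M : ℝ) (hf : ContDiff ℝ 3 f)
    (hM : ∀ y : ℝ, |iteratedDeriv 3 f y| ≤ M) (x u : ℝ) (hu : 0 ≤ u) :
    |f (x + u) - 2 * f x + f (x - u) - u ^ 2 * iteratedDeriv 2 f x| ≤ 2 * M * u ^ 3 := by
  set f1 := deriv f with hf1
  set f2 := iteratedDeriv 2 f with hf2
  set f3 := iteratedDeriv 3 f with hf3
  have hM0 : 0 ≤ M := le_trans (abs_nonneg _) (hM 0)
  have hd0 : Differentiable ℝ f := hf.differentiable (by norm_num)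
  have hd1 : Differentiable ℝ f1 := by
    have := ContDiff.differentiable_iteratedDeriv 1 hf (by norm_num)
    simpa [iteratedDeriv_one] using this
  have hd2 : Differentiable ℝ f2 := ContDiff.differentiable_iteratedDeriv 2 hf (by norm_num)
  have hderiv1 : deriv f1 = f2 := by
    rw [hf1, hf2, iteratedDeriv_succ, iteratedDeriv_one]
  have hderiv2 : deriv f2 = f3 := by
    rw [hf2, hf3]
    exact (iteratedDeriv_succ (n := 2)).symm
  have hder1 : ∀ y, HasDerivAt f (f1 y) y := fun y => (hd0 y).hasDerivAt
  have hder2 : ∀ y, HasDerivAt f1 (f2 y) y := fun y => by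
    have := (hd1 y).hasDerivAt
    rwa [hderiv1] at this
  have hlip : ∀ y z, |f2 y - f2 z| ≤ M * |y - z| := by
    intro y z
    have hD : ∀ w ∈ (Set.univ : Set ℝ), HasDerivWithinAt f2 (f3 w) Set.univ w := fun w _ => by
      have := (hd2 w).hasDerivAt
      rw [hderiv2] at this
      exact this.hasDerivWithinAt
    have := convex_univ.norm_image_sub_le_of_norm_hasDerivWithin_le hD
      (fun w _ => by simpa using hM w) (Set.mem_univ z) (Set.mem_univ y)
    simpa [Real.norm_eq_abs] using this
  -- step 1
  have step1 : ∀ t ∈ Set.Icc (0:ℝ) u, |f1 (x + t) - f1 (x - t) - 2 * t * f2 x| ≤ 2 * M * u ^ 2 := by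
    intro t ht
    have ht0 := ht.1
    have htu := ht.2
    have h1 : |f1 (x + t) - f1 x - t * f2 x| ≤ M * u ^ 2 := by
      have hD : ∀ s ∈ Set.Icc (0:ℝ) t, HasDerivWithinAt (fun s => f1 (x + s) - f1 x - s * f2 x)
          (f2 (x + s) - f2 x) (Set.Icc 0 t) s := by
        intro s _
        have h := (((hder2 (x + s)).comp s ((hasDerivAt_id s).const_add x)).sub_const
          (f1 x)).sub ((hasDerivAt_id s).mul_const (f2 x))
        have h' : HasDerivAt (fun s => f1 (x + s) - f1 x - s * f2 x) (f2 (x + s) - f2 x) s := by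
          simpa [Pi.sub_def] using h
        exact h'.hasDerivWithinAt
      have hb : ∀ s ∈ Set.Icc (0:ℝ) t, ‖f2 (x + s) - f2 x‖ ≤ M * u := by
        intro s hs
        have := hlip (x + s) x
        have hs' : |x + s - x| = s := by
          rw [add_sub_cancel_left, abs_of_nonneg hs.1]
        rw [hs'] at this
        calc ‖f2 (x + s) - f2 x‖ = |f2 (x + s) - f2 x| := rfl
          _ ≤ M * s := this
          _ ≤ M * u := by nlinarith [hs.2]
      have := (convex_Icc (0:ℝ) t).norm_image_sub_le_of_norm_hasDerivWithin_le hD hb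
        (Set.left_mem_Icc.2 ht0) (Set.right_mem_Icc.2 ht0)
      simp only [Real.norm_eq_abs] at this
      calc |f1 (x + t) - f1 x - t * f2 x|
          = |(f1 (x + t) - f1 x - t * f2 x) - (f1 (x + 0) - f1 x - 0 * f2 x)| := by
            norm_num
        _ ≤ M * u * |t - 0| := this
        _ ≤ M * u * u := by
            have h : |t - 0| ≤ u := by rw [sub_zero, abs_of_nonneg ht0]; exact htu
            nlinarith [mul_nonneg hM0 hu, abs_nonneg (t - 0)]
        _ = M * u ^ 2 := by ring
    have h2 : |f1 (x - t) - f1 x + t * f2 x| ≤ M * u ^ 2 := by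
      have hD : ∀ s ∈ Set.Icc (0:ℝ) t, HasDerivWithinAt (fun s => f1 (x - s) - f1 x + s * f2 x)
          (f2 (x - s) * (-1) + f2 x) (Set.Icc 0 t) s := by
        intro s _
        have h := (((hder2 (x - s)).comp s ((hasDerivAt_id s).const_sub x)).sub_const
          (f1 x)).add ((hasDerivAt_id s).mul_const (f2 x))
        have h' : HasDerivAt (fun s => f1 (x - s) - f1 x + s * f2 x)
            (f2 (x - s) * (-1) + f2 x) s := by simpa [Pi.add_def, Pi.sub_def] using h
        exact h'.hasDerivWithinAt
      have hb : ∀ s ∈ Set.Icc (0:ℝ) t, ‖f2 (x - s) * (-1) + f2 x‖ ≤ M * u := by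
        intro s hs
        have := hlip x (x - s)
        have hs' : |x - (x - s)| = s := by
          rw [sub_sub_cancel, abs_of_nonneg hs.1]
        rw [hs'] at this
        have : |f2 (x - s) * (-1) + f2 x| ≤ M * s := by
          rw [show f2 (x - s) * (-1) + f2 x = -(f2 (x - s) - f2 x) by ring, abs_neg]
          calc |f2 (x - s) - f2 x| = |-(f2 x - f2 (x - s))| := by ring_nf
            _ = |f2 x - f2 (x - s)| := abs_neg _
            _ ≤ M * s := this
        calc ‖f2 (x - s) * (-1) + f2 x‖ = |f2 (x - s) * (-1) + f2 x| := rfl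
          _ ≤ M * s := this
          _ ≤ M * u := by nlinarith [hs.1, hs.2]
      have := (convex_Icc (0:ℝ) t).norm_image_sub_le_of_norm_hasDerivWithin_le hD hb
        (Set.left_mem_Icc.2 ht0) (Set.right_mem_Icc.2 ht0)
      simp only [Real.norm_eq_abs] at this
      calc |f1 (x - t) - f1 x + t * f2 x|
          = |(f1 (x - t) - f1 x + t * f2 x) - (f1 (x - 0) - f1 x + 0 * f2 x)| := by norm_num
        _ ≤ M * u * |t - 0| := this
        _ ≤ M * u ^ 2 := by
            have h : |t - 0| ≤ u := by rw [sub_zero, abs_of_nonneg ht0]; exact htu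
            nlinarith [mul_nonneg hM0 hu, abs_nonneg (t - 0)]
    calc |f1 (x + t) - f1 (x - t) - 2 * t * f2 x|
        = |(f1 (x + t) - f1 x - t * f2 x) - (f1 (x - t) - f1 x + t * f2 x)| := by ring_nf
      _ ≤ |f1 (x + t) - f1 x - t * f2 x| + |f1 (x - t) - f1 x + t * f2 x| := abs_sub _ _
      _ ≤ M * u ^ 2 + M * u ^ 2 := add_le_add h1 h2
      _ = 2 * M * u ^ 2 := by ring
  -- step 2
  have hD : ∀ t ∈ Set.Icc (0:ℝ) u, HasDerivWithinAt
      (fun t => f (x + t) - 2 * f x + f (x - t) - t ^ 2 * f2 x)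
      (f1 (x + t) + f1 (x - t) * (-1) - 2 * t * f2 x) (Set.Icc 0 u) t := by
    intro t _
    have h := ((((hder1 (x + t)).comp t ((hasDerivAt_id t).const_add x)).sub_const
      (2 * f x)).add ((hder1 (x - t)).comp t ((hasDerivAt_id t).const_sub x))).sub
      (((hasDerivAt_pow 2 t).mul_const (f2 x)))
    have h' : HasDerivAt (fun t => f (x + t) - 2 * f x + f (x - t) - t ^ 2 * f2 x)
        (f1 (x + t) + f1 (x - t) * (-1) - 2 * t * f2 x) t := by
      refine h.congr_deriv ?_
      push_cast
      ring
    exact h'.hasDerivWithinAt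
  have hb : ∀ t ∈ Set.Icc (0:ℝ) u, ‖f1 (x + t) + f1 (x - t) * (-1) - 2 * t * f2 x‖ ≤ 2 * M * u ^ 2 := by
    intro t ht
    have := step1 t ht
    calc ‖f1 (x + t) + f1 (x - t) * (-1) - 2 * t * f2 x‖
        = |f1 (x + t) - f1 (x - t) - 2 * t * f2 x| := by rw [Real.norm_eq_abs]; ring_nf
      _ ≤ 2 * M * u ^ 2 := this
  have := (convex_Icc (0:ℝ) u).norm_image_sub_le_of_norm_hasDerivWithin_le hD hb
    (Set.left_mem_Icc.2 hu) (Set.right_mem_Icc.2 hu)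
  simp only [Real.norm_eq_abs] at this
  calc |f (x + u) - 2 * f x + f (x - u) - u ^ 2 * f2 x|
      = |(f (x + u) - 2 * f x + f (x - u) - u ^ 2 * f2 x) -
          (f (x + 0) - 2 * f x + f (x - 0) - 0 ^ 2 * f2 x)| := by norm_num; ring_nf
    _ ≤ 2 * M * u ^ 2 * |u - 0| := this
    _ = 2 * M * u ^ 3 := by rw [sub_zero, abs_of_nonneg hu]; ring

set_option maxHeartbeats 2000000 in
theorem infinite_range_laplacian_consistency
    (a : ℕ → ℝ) (C ρ : ℝ) (hC : 0 < C) (hρ : ρ ∈ Set.Ioo (0 : ℝ) 1)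
    (ha : ∀ k : ℕ, 1 ≤ k → |a k| ≤ C * ρ ^ k)
    (hsum : ∑' k : ℕ, a (k + 1) = 1)
    (f : ℝ → ℝ) (M : ℝ) (hf : ContDiff ℝ 3 f)
    (hM : ∀ y : ℝ, |iteratedDeriv 3 f y| ≤ M) :
    ∃ C' > 0, ∀ h ∈ Set.Ioo (0 : ℝ) 1, ∀ x : ℝ,
      |(∑' k : ℕ, a (k + 1) *
          (f (x + (k + 1) * h) - 2 * f x + f (x - (k + 1) * h)) / ((k + 1) ^ 2 * h ^ 2))
        - iteratedDeriv 2 f x| ≤ C' * h := by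
  obtain ⟨hρ0, hρ1⟩ := hρ
  have hM0 : 0 ≤ M := le_trans (abs_nonneg _) (hM 0)
  have habs : |ρ| < 1 := by rw [abs_of_pos hρ0]; exact hρ1
  have hSsum : Summable (fun k : ℕ => ((k : ℝ) + 1) * ρ ^ (k + 1)) := by
    have h1 : Summable (fun n : ℕ => (n : ℝ) ^ 1 * ρ ^ n) :=
      summable_pow_mul_geometric_of_norm_lt_one 1 (by rwa [Real.norm_eq_abs])
    have h2 := (summable_nat_add_iff 1).2 h1
    simpa [pow_one] using h2
  set S := ∑' k : ℕ, ((k : ℝ) + 1) * ρ ^ (k + 1) with hS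
  have hS0 : 0 ≤ S := tsum_nonneg fun k => by positivity
  have hsa : Summable (fun k : ℕ => a (k + 1)) := by
    have hg : Summable (fun k : ℕ => C * ρ ^ (k + 1)) := by
      have := (summable_geometric_of_lt_one hρ0.le hρ1).mul_left C
      exact (summable_nat_add_iff 1).2 this
    exact Summable.of_norm_bounded hg fun k => by
      simpa [Real.norm_eq_abs] using ha (k + 1) (Nat.le_add_left 1 k)
  refine ⟨2 * C * M * S + 1, by positivity, ?_⟩
  rintro h ⟨hh0, hh1⟩ x
  set f2 := iteratedDeriv 2 f with hf2
  set g : ℕ → ℝ := fun k => a (k + 1) *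
      (f (x + ((k : ℝ) + 1) * h) - 2 * f x + f (x - ((k : ℝ) + 1) * h)) /
      (((k : ℝ) + 1) ^ 2 * h ^ 2) with hg
  set e : ℕ → ℝ := fun k => g k - a (k + 1) * f2 x with he
  have key : ∀ k : ℕ, |e k| ≤ 2 * C * M * h * (((k : ℝ) + 1) * ρ ^ (k + 1)) := by
    intro k
    set u : ℝ := ((k : ℝ) + 1) * h with hu
    have hu0 : 0 < u := by positivity
    have hq : (((k : ℝ) + 1) ^ 2 * h ^ 2) = u ^ 2 := by rw [hu]; ring
    have hbd := second_diff_bound f M hf hM x u hu0.le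
    have hek : e k = a (k + 1) *
        ((f (x + u) - 2 * f x + f (x - u)) - u ^ 2 * f2 x) / u ^ 2 := by
      simp only [he, hg]
      rw [hq]
      field_simp
      ring
    have hak : |a (k + 1)| ≤ C * ρ ^ (k + 1) := ha (k + 1) (Nat.le_add_left 1 k)
    calc |e k| = |a (k + 1)| * |(f (x + u) - 2 * f x + f (x - u)) - u ^ 2 * f2 x| / u ^ 2 := by
          rw [hek, abs_div, abs_mul, abs_of_pos (by positivity : (0:ℝ) < u ^ 2)]
      _ ≤ (C * ρ ^ (k + 1)) * (2 * M * u ^ 3) / u ^ 2 := by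
          apply div_le_div_of_nonneg_right ?_ (by positivity)
          · exact mul_le_mul hak hbd (abs_nonneg _) (by positivity)
      _ = (C * ρ ^ (k + 1)) * (2 * M * u) := by field_simp
      _ = 2 * C * M * h * (((k : ℝ) + 1) * ρ ^ (k + 1)) := by rw [hu]; ring
  have hesum : Summable e :=
    Summable.of_norm_bounded (hSsum.mul_left (2 * C * M * h)) fun k => by
      simpa [Real.norm_eq_abs] using key k
  have hgsum : Summable g := by
    have := hesum.add (hsa.mul_right (f2 x))
    simpa [he] using this
  have htsum : (∑' k, g k) - f2 x = ∑' k, e k := by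
    have h2 : ∑' k : ℕ, (a (k + 1) * f2 x) = f2 x := by
      rw [tsum_mul_right, hsum, one_mul]
    have h1 : ∑' k : ℕ, (g k - a (k + 1) * f2 x) =
        (∑' k, g k) - ∑' k : ℕ, (a (k + 1) * f2 x) :=
      (hgsum.hasSum.sub (hsa.mul_right (f2 x)).hasSum).tsum_eq
    rw [h2] at h1
    exact h1.symm
  have hfinal : |(∑' k, g k) - f2 x| ≤ 2 * C * M * h * S := by
    rw [htsum]
    calc |∑' k, e k| ≤ ∑' k, |e k| := by
          have h3 : Summable fun i => ‖e i‖ := by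
            simpa [Real.norm_eq_abs] using hesum.abs
          simpa [Real.norm_eq_abs] using norm_tsum_le_tsum_norm h3
      _ ≤ ∑' k : ℕ, 2 * C * M * h * (((k : ℝ) + 1) * ρ ^ (k + 1)) := by
          exact Summable.tsum_le_tsum key hesum.abs (hSsum.mul_left _)
      _ = 2 * C * M * h * S := by rw [tsum_mul_left]
  have hgoal : (∑' k : ℕ, a (k + 1) *
      (f (x + ((k : ℝ) + 1) * h) - 2 * f x + f (x - ((k : ℝ) + 1) * h)) /
      (((k : ℝ) + 1) ^ 2 * h ^ 2)) = ∑' k, g k := rfl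
  rw [hgoal]
  calc |(∑' k, g k) - f2 x| ≤ 2 * C * M * h * S := hfinal
    _ ≤ (2 * C * M * S + 1) * h := by nlinarith [mul_nonneg (mul_nonneg (mul_nonneg (by norm_num : (0:ℝ) ≤ 2) hC.le) hM0) hS0]
end

section
/- Let f ∈ W^{3,∞}(ℝ) be real-valued and v ∈ L²(ℝ), k ≥ 1, h > 0. Then (1/(kh))·((∂⁺_{kh} f)·v(·+kh) - (∂⁻_{kh} f)·v(·-kh)) = 2 f'·∂⁰_{kh} v + f''·M⁰_{kh} v + R, where R := (1/(k²h²))·(v(·+kh)·T_{3,f}(·,kh) + v(·-kh)·T_{3,f}(·,-kh)) satisfies ‖R‖_{L²} ≤ kh‖f‖_{W^{3,∞}}‖v‖_{L²}. -/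
open MeasureTheory Real

private lemma taylor3_bound (f : ℝ → ℝ) (F : ℝ) (hf : ContDiff ℝ 3 f)
    (h3 : ∀ y : ℝ, |iteratedDeriv 3 f y| ≤ F) (x t : ℝ) :
    |f (x + t) - f x - deriv f x * t - iteratedDeriv 2 f x * t ^ 2 / 2| ≤ F * |t| ^ 3 / 2 := by
  have hF0 : 0 ≤ F := le_trans (abs_nonneg _) (h3 0)
  have hdf : Differentiable ℝ f := hf.differentiable (by norm_num)
  have hf1 : ContDiff ℝ 2 (deriv f) := by
    have h' : ContDiff ℝ (2 + 1) f := by exact_mod_cast hf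
    exact (contDiff_succ_iff_deriv.mp h').2.2
  have hf2 : ContDiff ℝ 1 (deriv (deriv f)) := by
    have h' : ContDiff ℝ (1 + 1) (deriv f) := by exact_mod_cast hf1
    exact (contDiff_succ_iff_deriv.mp h').2.2
  have hi2 : iteratedDeriv 2 f = deriv (deriv f) := by
    rw [iteratedDeriv_succ, iteratedDeriv_one]
  have hi3 : iteratedDeriv 3 f = deriv (deriv (deriv f)) := by
    rw [iteratedDeriv_succ, hi2]
  have hd1 : ∀ y : ℝ, HasDerivAt f (deriv f y) y := fun y => (hdf y).hasDerivAt
  have hd2 : ∀ y : ℝ, HasDerivAt (deriv f) (iteratedDeriv 2 f y) y := by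
    intro y
    rw [hi2]
    exact (hf1.differentiable (by norm_num) y).hasDerivAt
  have hd3 : ∀ y : ℝ, HasDerivAt (iteratedDeriv 2 f) (iteratedDeriv 3 f y) y := by
    intro y
    rw [hi3]
    conv in iteratedDeriv 2 f => rw [hi2]
    exact (hf2.differentiable (by norm_num) y).hasDerivAt
  -- Step A : Lipschitz bound on second derivative
  have stepA : ∀ a b : ℝ, |iteratedDeriv 2 f b - iteratedDeriv 2 f a| ≤ F * |b - a| := by
    intro a b
    have := convex_univ.norm_image_sub_le_of_norm_hasDerivWithin_le
      (f := iteratedDeriv 2 f) (f' := iteratedDeriv 3 f)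
      (fun y _ => (hd3 y).hasDerivWithinAt) (fun y _ => by simpa [Real.norm_eq_abs] using h3 y)
      (Set.mem_univ a) (Set.mem_univ b)
    simpa [Real.norm_eq_abs] using this
  set φ : ℝ → ℝ := fun w => deriv f (x + w) - deriv f x - iteratedDeriv 2 f x * w with hφ
  have hφd : ∀ w : ℝ, HasDerivAt φ (iteratedDeriv 2 f (x + w) - iteratedDeriv 2 f x) w := by
    intro w
    have h1 : HasDerivAt (fun w : ℝ => deriv f (x + w)) (iteratedDeriv 2 f (x + w)) w := by
      simpa [Function.comp_def] using (hd2 (x + w)).comp w ((hasDerivAt_id w).const_add x)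
    have h5 := (h1.sub_const (deriv f x)).sub ((hasDerivAt_id w).const_mul (iteratedDeriv 2 f x))
    simp only [mul_one] at h5
    exact h5
  have stepB : ∀ u : ℝ, |φ u| ≤ F * u ^ 2 := by
    intro u
    have hbound : ∀ w ∈ Set.uIcc (0 : ℝ) u,
        ‖iteratedDeriv 2 f (x + w) - iteratedDeriv 2 f x‖ ≤ F * |u| := by
      intro w hw
      have h1 : |iteratedDeriv 2 f (x + w) - iteratedDeriv 2 f x| ≤ F * |w| := by
        simpa using stepA x (x + w)
      have h2 : |w| ≤ |u| := by
        rcases Set.mem_uIcc.mp hw with hw | hw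
        · rw [abs_of_nonneg hw.1, abs_of_nonneg (le_trans hw.1 hw.2)]; exact hw.2
        · rw [abs_of_nonpos hw.2, abs_of_nonpos (le_trans hw.1 hw.2)]; linarith [hw.1]
      refine le_trans (by simpa [Real.norm_eq_abs] using h1) ?_
      nlinarith [abs_nonneg w, abs_nonneg u]
    have hkey := (convex_uIcc (0 : ℝ) u).norm_image_sub_le_of_norm_hasDerivWithin_le
      (fun w _ => (hφd w).hasDerivWithinAt) hbound Set.left_mem_uIcc Set.right_mem_uIcc
    have hφ0 : φ 0 = 0 := by simp [hφ]
    rw [hφ0, sub_zero, sub_zero] at hkey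
    calc |φ u| ≤ F * |u| * |u| := by simpa [Real.norm_eq_abs] using hkey
      _ = F * u ^ 2 := by rw [mul_assoc, ← abs_mul, ← sq, abs_of_nonneg (sq_nonneg u)]
  set G : ℝ → ℝ := fun w => f (x + w) - f x - deriv f x * w - iteratedDeriv 2 f x * w ^ 2 / 2
    with hG
  have hGd : ∀ w : ℝ, HasDerivAt G (φ w) w := by
    intro w
    have h1 : HasDerivAt (fun w : ℝ => f (x + w)) (deriv f (x + w)) w := by
      simpa [Function.comp_def] using (hd1 (x + w)).comp w ((hasDerivAt_id w).const_add x)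
    have h2 : HasDerivAt (fun w : ℝ => iteratedDeriv 2 f x * w ^ 2 / 2)
        (iteratedDeriv 2 f x * w) w := by
      have := ((hasDerivAt_pow 2 w).const_mul (iteratedDeriv 2 f x)).div_const 2
      simpa [mul_comm, mul_assoc, mul_div_assoc] using this
    have h4 := (((h1.sub_const (f x)).sub
      ((hasDerivAt_id w).const_mul (deriv f x))).sub h2)
    convert h4 using 1
    case e'_9 => simp [hφ]
    all_goals rfl
  have hφc : Continuous φ := by
    refine (Continuous.sub (Continuous.sub ?_ continuous_const)
      (continuous_const.mul continuous_id)) 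
    exact (hf1.continuous).comp (continuous_const.add continuous_id)
  have hint : ∫ w in (0:ℝ)..t, φ w = G t - G 0 :=
    intervalIntegral.integral_eq_sub_of_hasDerivAt (fun w _ => hGd w)
      (hφc.intervalIntegrable 0 t)
  have hG0 : G 0 = 0 := by simp [hG]
  have hGt : G t = ∫ w in (0:ℝ)..t, φ w := by rw [hint, hG0, sub_zero]
  have hb : ‖∫ w in (0:ℝ)..t, φ w‖ ≤ |∫ w in (0:ℝ)..t, F * w ^ 2| := by
    apply intervalIntegral.norm_integral_le_abs_of_norm_le
    · exact Filter.Eventually.of_forall fun w => by simpa [Real.norm_eq_abs] using stepB w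
    · exact (continuous_const.mul (continuous_pow 2)).intervalIntegrable 0 t
  have hcomp : ∫ w in (0:ℝ)..t, F * w ^ 2 = F * t ^ 3 / 3 := by
    rw [intervalIntegral.integral_const_mul, integral_pow]
    norm_num; ring
  have hGle : |G t| ≤ |F * t ^ 3 / 3| := by
    rw [hGt]; rw [hcomp] at hb; simpa [Real.norm_eq_abs] using hb
  have h4 : |F * t ^ 3 / 3| = F * |t| ^ 3 / 3 := by
    rw [abs_div, abs_mul, abs_of_nonneg hF0, ← abs_pow]
    norm_num
  calc |f (x + t) - f x - deriv f x * t - iteratedDeriv 2 f x * t ^ 2 / 2|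
      = |G t| := rfl
    _ ≤ F * |t| ^ 3 / 3 := by rw [← h4]; exact hGle
    _ ≤ F * |t| ^ 3 / 2 := by
        have : 0 ≤ F * |t| ^ 3 := by positivity
        linarith

theorem unbalanced_difference_identity_and_bound
    (f : ℝ → ℝ) (F : ℝ) (hf : ContDiff ℝ 3 f)
    (hF : ∀ x : ℝ, |f x| ≤ F ∧ |deriv f x| ≤ F ∧ |iteratedDeriv 2 f x| ≤ F ∧
      |iteratedDeriv 3 f x| ≤ F)
    (v : ℝ → ℝ) (hv : MemLp v 2 (volume : Measure ℝ))
    (k : ℕ) (hk : 1 ≤ k) (h : ℝ) (hh : 0 < h) :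
    (∀ x : ℝ,
      (1 / (k * h)) * (((f (x + k * h) - f x) / (k * h)) * v (x + k * h)
          - ((f x - f (x - k * h)) / (k * h)) * v (x - k * h))
      = 2 * deriv f x * ((v (x + k * h) - v (x - k * h)) / (2 * k * h))
        + iteratedDeriv 2 f x * ((v (x + k * h) + v (x - k * h)) / 2)
        + (1 / ((k : ℝ) ^ 2 * h ^ 2)) *
            (v (x + k * h) *
              (f (x + k * h) - f x - deriv f x * (k * h)
                - iteratedDeriv 2 f x * (k * h) ^ 2 / 2)
             + v (x - k * h) *
              (f (x - k * h) - f x - deriv f x * (-(k * h))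
                - iteratedDeriv 2 f x * (-(k * h)) ^ 2 / 2)))
    ∧ eLpNorm (fun x => (1 / ((k : ℝ) ^ 2 * h ^ 2)) *
            (v (x + k * h) *
              (f (x + k * h) - f x - deriv f x * (k * h)
                - iteratedDeriv 2 f x * (k * h) ^ 2 / 2)
             + v (x - k * h) *
              (f (x - k * h) - f x - deriv f x * (-(k * h))
                - iteratedDeriv 2 f x * (-(k * h)) ^ 2 / 2))) 2 volume
      ≤ ENNReal.ofReal (k * h * F) * eLpNorm v 2 volume := by
  have hk0 : (0:ℝ) < (k : ℝ) := by exact_mod_cast Nat.lt_of_lt_of_le Nat.zero_lt_one hk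
  have hc0 : (0:ℝ) < (k : ℝ) * h := mul_pos hk0 hh
  have hF0 : 0 ≤ F := le_trans (abs_nonneg _) (hF 0).1
  set c : ℝ := (k : ℝ) * h with hc
  constructor
  · intro x
    have h1 : (k : ℝ) ≠ 0 := ne_of_gt hk0
    have h2 : h ≠ 0 := ne_of_gt hh
    have hcne : c ≠ 0 := ne_of_gt hc0
    field_simp
    ring
  · have h3 : ∀ y : ℝ, |iteratedDeriv 3 f y| ≤ F := fun y => (hF y).2.2.2
    have hT : ∀ x s : ℝ,
        |f (x + s) - f x - deriv f x * s - iteratedDeriv 2 f x * s ^ 2 / 2| ≤ F * |s| ^ 3 / 2 :=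
      taylor3_bound f F hf h3
    have key : ∀ x : ℝ,
        ‖(1 / ((k : ℝ) ^ 2 * h ^ 2)) *
            (v (x + c) *
              (f (x + c) - f x - deriv f x * c
                - iteratedDeriv 2 f x * c ^ 2 / 2)
             + v (x - c) *
              (f (x - c) - f x - deriv f x * (-c)
                - iteratedDeriv 2 f x * (-c) ^ 2 / 2))‖
        ≤ (c * F / 2) * (‖v (x + c)‖ + ‖v (x - c)‖) := by
      intro x
      have hb1 : |f (x + c) - f x - deriv f x * c - iteratedDeriv 2 f x * c ^ 2 / 2|
          ≤ F * c ^ 3 / 2 := by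
        have := hT x c
        rwa [abs_of_pos hc0] at this
      have hb2 : |f (x - c) - f x - deriv f x * (-c) - iteratedDeriv 2 f x * (-c) ^ 2 / 2|
          ≤ F * c ^ 3 / 2 := by
        have := hT x (-c)
        rw [abs_neg, abs_of_pos hc0] at this
        simpa [sub_eq_add_neg] using this
      rw [Real.norm_eq_abs, abs_mul]
      have hsum : |v (x + c) *
              (f (x + c) - f x - deriv f x * c
                - iteratedDeriv 2 f x * c ^ 2 / 2)
             + v (x - c) *
              (f (x - c) - f x - deriv f x * (-c)
                - iteratedDeriv 2 f x * (-c) ^ 2 / 2)|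
          ≤ (|v (x + c)| + |v (x - c)|) * (F * c ^ 3 / 2) := by
        calc _ ≤ |v (x + c)| * |f (x + c) - f x - deriv f x * c
                  - iteratedDeriv 2 f x * c ^ 2 / 2|
              + |v (x - c)| * |f (x - c) - f x - deriv f x * (-c)
                  - iteratedDeriv 2 f x * (-c) ^ 2 / 2| :=
              le_trans (abs_add_le _ _) (by rw [abs_mul, abs_mul])
          _ ≤ |v (x + c)| * (F * c ^ 3 / 2) + |v (x - c)| * (F * c ^ 3 / 2) := by
              gcongr
          _ = (|v (x + c)| + |v (x - c)|) * (F * c ^ 3 / 2) := by ring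
      have habs : |1 / ((k : ℝ) ^ 2 * h ^ 2)| = 1 / c ^ 2 := by
        rw [abs_of_pos (by positivity)]
        rw [hc]; ring
      rw [habs]
      simp only [Real.norm_eq_abs]
      calc (1 / c ^ 2) * |_| ≤ (1 / c ^ 2) * ((|v (x + c)| + |v (x - c)|) * (F * c ^ 3 / 2)) := by
            gcongr
        _ = (c * F / 2) * (|v (x + c)| + |v (x - c)|) := by
            have hcne : c ≠ 0 := ne_of_gt hc0
            field_simp
    have hvm : AEStronglyMeasurable v (volume : Measure ℝ) := hv.1
    have mp1 : MeasurePreserving (fun x : ℝ => x + c) volume volume :=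
      measurePreserving_add_right volume c
    have mp2 : MeasurePreserving (fun x : ℝ => x - c) volume volume :=
      measurePreserving_sub_right volume c
    have hvm1 : AEStronglyMeasurable (fun x : ℝ => v (x + c)) volume :=
      hvm.comp_measurePreserving mp1
    have hvm2 : AEStronglyMeasurable (fun x : ℝ => v (x - c)) volume :=
      hvm.comp_measurePreserving mp2
    have he1 : eLpNorm (fun x : ℝ => v (x + c)) 2 volume = eLpNorm v 2 volume :=
      eLpNorm_comp_measurePreserving hvm mp1
    have he2 : eLpNorm (fun x : ℝ => v (x - c)) 2 volume = eLpNorm v 2 volume :=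
      eLpNorm_comp_measurePreserving hvm mp2
    calc eLpNorm (fun x => (1 / ((k : ℝ) ^ 2 * h ^ 2)) *
            (v (x + c) *
              (f (x + c) - f x - deriv f x * c
                - iteratedDeriv 2 f x * c ^ 2 / 2)
             + v (x - c) *
              (f (x - c) - f x - deriv f x * (-c)
                - iteratedDeriv 2 f x * (-c) ^ 2 / 2))) 2 volume
        ≤ eLpNorm (fun x => (c * F / 2) * (‖v (x + c)‖ + ‖v (x - c)‖)) 2 volume :=
          eLpNorm_mono_real fun x => key x
      _ = (‖(c * F / 2)‖₊ : ENNReal) * eLpNorm (fun x => ‖v (x + c)‖ + ‖v (x - c)‖) 2 volume := by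
          rw [show (fun x : ℝ => c * F / 2 * (‖v (x + c)‖ + ‖v (x - c)‖))
              = (c * F / 2) • (fun x : ℝ => ‖v (x + c)‖ + ‖v (x - c)‖) from rfl,
            eLpNorm_const_smul]
          rfl
      _ ≤ (‖(c * F / 2)‖₊ : ENNReal) * (eLpNorm (fun x : ℝ => ‖v (x + c)‖) 2 volume
            + eLpNorm (fun x : ℝ => ‖v (x - c)‖) 2 volume) := by
          gcongr
          exact eLpNorm_add_le hvm1.norm hvm2.norm (by norm_num)
      _ = ENNReal.ofReal (c * F / 2) * (eLpNorm v 2 volume + eLpNorm v 2 volume) := by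
          rw [eLpNorm_norm, eLpNorm_norm, he1, he2,
            ← enorm_eq_nnnorm, Real.enorm_eq_ofReal (by positivity)]
      _ = ENNReal.ofReal (c * F) * eLpNorm v 2 volume := by
          rw [show (c * F : ℝ) = 2 * (c * F / 2) by ring,
            ENNReal.ofReal_mul (by norm_num), ENNReal.ofReal_ofNat]
          ring
end

section
/- Let g₀ > 0, c > 2√g₀, κ₀ := c/2 - √(c²/4 - g₀), and let (a_k) satisfy the geometric decay and normalization assumptions. Define G(h,κ) := g₀ - cκ + ∑_{k≥1} a_k (e^{-κkh} - 2 + e^{κkh})/(k²h²) for h > 0, extended at h = 0 by G(0,κ) := g₀ - cκ + κ². Then G(0,κ₀) = 0 and ∂_κ G(0, κ₀) = 2κ₀ - c < 0; consequently, by the implicit function theorem (with G of class C¹ near (0,κ₀) when the h-variable is replaced by h² or a suitable smooth parametrization), there exist h₀ > 0 and a function κ : (0,h₀) → ℝ with G(h, κ(h)) = 0 for all h ∈ (0,h₀) and κ(h) → κ₀ as h → 0. -/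
open Real Filter
set_option maxHeartbeats 1600000

lemma div_sub_bound {φ den κ2 E : ℝ} (hden : 0 < den) (hlow : κ2 * den ≤ φ)
    (hup : φ ≤ κ2 * den * E) : |φ / den - κ2| ≤ κ2 * (E - 1) := by
  have h1 : φ/den - κ2 = (φ - κ2*den)/den := by field_simp
  rw [h1, abs_of_nonneg (div_nonneg (by linarith) hden.le), div_le_iff₀ hden]
  nlinarith


lemma phi_lower_nonneg {x : ℝ} (hx : 0 ≤ x) : x^2 ≤ Real.exp (-x) - 2 + Real.exp x := by
  have hs : x/2 ≤ Real.sinh (x/2) := Real.self_le_sinh_iff.2 (by linarith)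
  rw [Real.sinh_eq] at hs
  have h1 : Real.exp (x/2) * Real.exp (x/2) = Real.exp x := by
    rw [← Real.exp_add]; ring_nf
  have h3 : Real.exp (-(x/2)) * Real.exp (-(x/2)) = Real.exp (-x) := by
    rw [← Real.exp_add]; ring_nf
  have h2 : Real.exp (x/2) * Real.exp (-(x/2)) = 1 := by
    rw [← Real.exp_add]; simp
  nlinarith [Real.exp_pos (x/2), Real.exp_pos (-(x/2)), hx]

lemma phi_lower (x : ℝ) : x^2 ≤ Real.exp (-x) - 2 + Real.exp x := by
  rcases le_total 0 x with h | h
  · exact phi_lower_nonneg h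
  · have := phi_lower_nonneg (x := -x) (by linarith)
    rw [neg_neg] at this
    nlinarith [this]

lemma phi_upper_nonneg {x : ℝ} (hx : 0 ≤ x) :
    Real.exp (-x) - 2 + Real.exp x ≤ x^2 * Real.exp (2*x) := by
  have he : Real.exp (-x) * Real.exp x = 1 := by rw [← Real.exp_add]; simp
  have h2x : Real.exp x * Real.exp x = Real.exp (2*x) := by rw [← Real.exp_add]; ring_nf
  have hexp1 : -x + 1 ≤ Real.exp (-x) := Real.add_one_le_exp (-x)
  have hle1 : Real.exp (-x) ≤ 1 := Real.exp_le_one_iff.2 (by linarith)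
  have hE1 : 1 ≤ Real.exp x := Real.one_le_exp (by linarith)
  have ha : Real.exp x - 1 ≤ x * Real.exp x := by nlinarith [Real.exp_pos x]
  have hb : Real.exp (-x) - 2 + Real.exp x = Real.exp (-x) * (Real.exp x - 1)^2 := by
    linear_combination (2 - Real.exp x) * he
  nlinarith [sq_nonneg (Real.exp x - 1), Real.exp_pos x, Real.exp_pos (-x)]

lemma phi_upper (x : ℝ) :
    Real.exp (-x) - 2 + Real.exp x ≤ x^2 * Real.exp (2*|x|) := by
  rcases le_total 0 x with h | h
  · rw [abs_of_nonneg h]; exact phi_upper_nonneg h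
  · rw [abs_of_nonpos h]
    have := phi_upper_nonneg (x := -x) (by linarith)
    rw [neg_neg] at this
    nlinarith [this]


theorem decay_rate_implicit_function
    (a : ℕ → ℝ) (C ρ : ℝ) (hC : 0 < C) (hρ : ρ ∈ Set.Ioo (0 : ℝ) 1)
    (ha : ∀ k : ℕ, 1 ≤ k → |a k| ≤ C * ρ ^ k)
    (hsum : ∑' k : ℕ, a (k + 1) = 1)
    (c g₀ : ℝ) (hg : 0 < g₀) (hc : c > 2 * Real.sqrt g₀) :
    let κ₀ := c / 2 - Real.sqrt (c ^ 2 / 4 - g₀)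
    let G0 : ℝ → ℝ := fun κ => g₀ - c * κ + κ ^ 2
    let G : ℝ → ℝ → ℝ := fun h κ => g₀ - c * κ + ∑' k : ℕ, a (k + 1) *
        (Real.exp (-κ * ((k + 1) * h)) - 2 + Real.exp (κ * ((k + 1) * h)))
          / (((k : ℝ) + 1) ^ 2 * h ^ 2)
    G0 κ₀ = 0 ∧ deriv G0 κ₀ = 2 * κ₀ - c ∧ 2 * κ₀ - c < 0 ∧
      ∃ h₀ > 0, ∃ κf : ℝ → ℝ,
        (∀ h ∈ Set.Ioo (0 : ℝ) h₀, G h (κf h) = 0) ∧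
        Tendsto κf (nhdsWithin 0 (Set.Ioi 0)) (nhds κ₀) := by
  intro κ₀ G0 G
  classical
  have hsq : Real.sqrt g₀ ^ 2 = g₀ := Real.sq_sqrt hg.le
  have hg4 : g₀ < c^2/4 := by nlinarith [Real.sqrt_nonneg g₀]
  set r : ℝ := Real.sqrt (c^2/4 - g₀) with hrdef
  have hr0 : 0 < r := Real.sqrt_pos.2 (by linarith)
  have hr2 : r^2 = c^2/4 - g₀ := Real.sq_sqrt (by linarith)
  have hκ₀ : κ₀ = c/2 - r := rfl
  have p1 : G0 κ₀ = 0 := by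
    show g₀ - c * κ₀ + κ₀ ^ 2 = 0
    rw [hκ₀]; nlinarith [hr2]
  have p2 : deriv G0 κ₀ = 2 * κ₀ - c := by
    have hd : HasDerivAt G0 (2 * κ₀ - c) κ₀ := by
      have h1 := ((hasDerivAt_id κ₀).const_mul c).const_sub g₀
      have h2 := h1.add (hasDerivAt_pow 2 κ₀)
      refine h2.congr_deriv ?_
      push_cast; ring
    exact hd.deriv
  have p3 : 2 * κ₀ - c < 0 := by rw [hκ₀]; linarith
  obtain ⟨hρ0, hρ1⟩ := hρ
  set M : ℝ := |κ₀| + r with hMdef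
  have hM0 : 0 < M := by positivity
  set Q : ℝ → ℝ := fun h => ρ * Real.exp (2*M*h) with hQdef
  set F : ℝ → ℝ := fun h => C * M^2 * (Q h/(1 - Q h) - ρ/(1-ρ)) with hFdef
  have hQ0 : ∀ h, 0 < Q h := fun h => by positivity
  -- the main quantitative estimate for fixed h
  have key : ∀ h : ℝ, 0 < h → Q h < 1 → ∀ κ : ℝ, |κ| ≤ M →
      Summable (fun k : ℕ => a (k + 1) *
        (Real.exp (-κ * ((k + 1) * h)) - 2 + Real.exp (κ * ((k + 1) * h)))
          / (((k : ℝ) + 1) ^ 2 * h ^ 2)) ∧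
      (∀ k : ℕ, |a (k + 1) *
        (Real.exp (-κ * ((k + 1) * h)) - 2 + Real.exp (κ * ((k + 1) * h)))
          / (((k : ℝ) + 1) ^ 2 * h ^ 2)| ≤ C * M^2 * Q h ^ (k+1)) ∧
      |(∑' k : ℕ, a (k + 1) *
        (Real.exp (-κ * ((k + 1) * h)) - 2 + Real.exp (κ * ((k + 1) * h)))
          / (((k : ℝ) + 1) ^ 2 * h ^ 2)) - κ^2| ≤ F h := by
    intro h hpos hQ1 κ hκM
    set f : ℕ → ℝ := fun k => a (k + 1) *
        (Real.exp (-κ * ((k + 1) * h)) - 2 + Real.exp (κ * ((k + 1) * h)))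
          / (((k : ℝ) + 1) ^ 2 * h ^ 2) with hfdef
    have hden : ∀ k : ℕ, (0:ℝ) < ((k : ℝ) + 1) ^ 2 * h ^ 2 := fun k => by positivity
    have hκ2 : κ^2 ≤ M^2 := by nlinarith [abs_nonneg κ, neg_abs_le κ, le_abs_self κ]
    have hxfact : ∀ k : ℕ, (κ * (((k:ℝ) + 1) * h))^2 = κ^2 * (((k : ℝ) + 1) ^ 2 * h ^ 2) := by
      intro k; ring
    have hlow : ∀ k : ℕ, κ^2 * (((k : ℝ) + 1) ^ 2 * h ^ 2) ≤
        Real.exp (-κ * ((k + 1) * h)) - 2 + Real.exp (κ * ((k + 1) * h)) := by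
      intro k
      have := phi_lower (κ * (((k:ℝ) + 1) * h))
      have hrw : -(κ * (((k:ℝ) + 1) * h)) = -κ * (((k:ℝ) + 1) * h) := by ring
      rw [hrw, hxfact] at this; exact this
    have hup : ∀ k : ℕ, Real.exp (-κ * ((k + 1) * h)) - 2 + Real.exp (κ * ((k + 1) * h)) ≤
        κ^2 * (((k : ℝ) + 1) ^ 2 * h ^ 2) * Real.exp (2*|κ * (((k:ℝ) + 1) * h)|) := by
      intro k
      have := phi_upper (κ * (((k:ℝ) + 1) * h))
      have hrw : -(κ * (((k:ℝ) + 1) * h)) = -κ * (((k:ℝ) + 1) * h) := by ring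
      rw [hrw, hxfact] at this; exact this
    have hφ0 : ∀ k : ℕ, (0:ℝ) ≤ Real.exp (-κ * ((k + 1) * h)) - 2 + Real.exp (κ * ((k + 1) * h)) :=
      fun k => le_trans (by positivity) (hlow k)
    have hExp : ∀ k : ℕ, Real.exp (2*|κ * (((k:ℝ) + 1) * h)|) ≤ Real.exp (2*M*h) ^ (k+1) := by
      intro k
      rw [← Real.exp_nat_mul]
      apply Real.exp_le_exp.2
      have h1 : |κ * (((k:ℝ) + 1) * h)| = |κ| * (((k:ℝ)+1) * h) := by
        rw [abs_mul, abs_of_nonneg (by positivity : (0:ℝ) ≤ ((k:ℝ)+1)*h)]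
      rw [h1]; push_cast
      nlinarith [mul_le_mul_of_nonneg_right hκM (by positivity : (0:ℝ) ≤ 2*((k:ℝ)+1)*h)]
    have hE1 : ∀ k : ℕ, (1:ℝ) ≤ Real.exp (2*|κ * (((k:ℝ) + 1) * h)|) :=
      fun k => Real.one_le_exp (by positivity)
    have habs : ∀ k : ℕ, |f k| ≤ C * M^2 * Q h ^ (k+1) := by
      intro k
      have hak := ha (k+1) (by omega)
      have h1 := hExp k
      calc |f k| = |a (k+1)| * (Real.exp (-κ * ((k + 1) * h)) - 2 + Real.exp (κ * ((k + 1) * h)))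
            / (((k : ℝ) + 1) ^ 2 * h ^ 2) := by
            rw [hfdef]; rw [abs_div, abs_mul, abs_of_nonneg (hφ0 k), abs_of_pos (hden k)]
        _ ≤ (C * ρ^(k+1)) * (κ^2 * (((k : ℝ) + 1) ^ 2 * h ^ 2) *
              Real.exp (2*|κ * (((k:ℝ) + 1) * h)|)) / (((k : ℝ) + 1) ^ 2 * h ^ 2) := by
            gcongr
            · exact hφ0 k
            · exact hup k
        _ = C * ρ^(k+1) * (κ^2 * Real.exp (2*|κ * (((k:ℝ) + 1) * h)|)) := by
            field_simp
        _ ≤ C * ρ^(k+1) * (M^2 * (Real.exp (2*M*h)) ^ (k+1)) := by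
            gcongr
        _ = C * M^2 * Q h ^ (k+1) := by rw [hQdef]; rw [mul_pow]; ring
    have hgeoQ : Summable (fun k : ℕ => Q h ^ (k+1)) := by
      have := summable_geometric_of_lt_one (hQ0 h).le hQ1
      simpa [pow_succ, mul_comm] using this.mul_left (Q h)
    have hgeoρ : Summable (fun k : ℕ => ρ ^ (k+1)) := by
      have := summable_geometric_of_lt_one hρ0.le hρ1
      simpa [pow_succ, mul_comm] using this.mul_left ρ
    have hsummu : Summable (fun k : ℕ => C * M^2 * Q h ^ (k+1)) := hgeoQ.mul_left _
    have hsumf : Summable f :=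
      Summable.of_norm_bounded hsummu (fun k => by simpa [Real.norm_eq_abs] using habs k)
    refine ⟨hsumf, habs, ?_⟩
    have hsuma : Summable (fun k : ℕ => a (k+1) * κ^2) := by
      apply Summable.mul_right
      apply Summable.of_norm_bounded (hgeoρ.mul_left C)
      intro k; simpa [Real.norm_eq_abs] using ha (k+1) (by omega)
    have hκ2sum : (∑' k : ℕ, a (k+1) * κ^2) = κ^2 := by rw [tsum_mul_right, hsum, one_mul]
    have hdiff : ∀ k : ℕ, |f k - a (k+1) * κ^2| ≤ C * M^2 * (Q h ^ (k+1) - ρ^(k+1)) := by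
      intro k
      have hak := ha (k+1) (by omega)
      have hdb := div_sub_bound (hden k) (hlow k) (hup k)
      have h1 : f k - a (k+1) * κ^2 = a (k+1) *
          ((Real.exp (-κ * ((k + 1) * h)) - 2 + Real.exp (κ * ((k + 1) * h)))
            / (((k : ℝ) + 1) ^ 2 * h ^ 2) - κ^2) := by
        rw [hfdef]; ring
      calc |f k - a (k+1) * κ^2| = |a (k+1)| *
            |(Real.exp (-κ * ((k + 1) * h)) - 2 + Real.exp (κ * ((k + 1) * h)))
              / (((k : ℝ) + 1) ^ 2 * h ^ 2) - κ^2| := by rw [h1, abs_mul]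
        _ ≤ (C * ρ^(k+1)) * (κ^2 * (Real.exp (2*|κ * (((k:ℝ) + 1) * h)|) - 1)) := by
            gcongr
        _ ≤ (C * ρ^(k+1)) * (M^2 * (Real.exp (2*M*h) ^ (k+1) - 1)) := by
            gcongr
            · linarith [hE1 k]
            · exact hExp k
        _ = C * M^2 * (Q h ^ (k+1) - ρ^(k+1)) := by
            rw [hQdef, mul_pow]; ring
    have hsd : Summable (fun k : ℕ => C * M^2 * (Q h ^ (k+1) - ρ^(k+1))) :=
      (hgeoQ.sub hgeoρ).mul_left _
    have habsum : Summable (fun k : ℕ => |f k - a (k+1) * κ^2|) :=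
      Summable.of_nonneg_of_le (fun k => abs_nonneg _) hdiff hsd
    have sumQ : ∑' k : ℕ, Q h ^ (k+1) = Q h * (1 - Q h)⁻¹ := by
      have h1 : (fun k : ℕ => Q h ^ (k+1)) = fun k => Q h * Q h ^ k := by
        funext k; rw [pow_succ]; ring
      rw [h1, tsum_mul_left, tsum_geometric_of_lt_one (hQ0 h).le hQ1]
    have sumρ : ∑' k : ℕ, ρ ^ (k+1) = ρ * (1 - ρ)⁻¹ := by
      have h1 : (fun k : ℕ => ρ ^ (k+1)) = fun k => ρ * ρ ^ k := by
        funext k; rw [pow_succ]; ring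
      rw [h1, tsum_mul_left, tsum_geometric_of_lt_one hρ0.le hρ1]
    calc |(∑' k, f k) - κ^2| = |∑' k, (f k - a (k+1) * κ^2)| := by
          rw [Summable.tsum_sub hsumf hsuma, hκ2sum]
      _ ≤ ∑' k, |f k - a (k+1) * κ^2| := by
          have := norm_tsum_le_tsum_norm (f := fun k => f k - a (k+1) * κ^2)
            (by simpa [Real.norm_eq_abs] using habsum)
          simpa [Real.norm_eq_abs] using this
      _ ≤ ∑' k, C * M^2 * (Q h ^ (k+1) - ρ^(k+1)) := Summable.tsum_le_tsum hdiff habsum hsd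
      _ = F h := by
          rw [tsum_mul_left, Summable.tsum_sub hgeoQ hgeoρ, sumQ, sumρ]
          simp [hFdef, div_eq_mul_inv]

  have claim : ∀ ε > 0, ∃ h₁ > 0, ∀ h ∈ Set.Ioo (0:ℝ) h₁,
      ∃ κ, |κ - κ₀| ≤ ε ∧ G h κ = 0 := by
    intro ε hε
    set t : ℝ := min ε r with htdef
    have ht0 : 0 < t := lt_min hε hr0
    have htr : t ≤ r := min_le_right _ _
    have htε : t ≤ ε := min_le_left _ _
    have hQc : Continuous Q := by
      rw [hQdef]; fun_prop
    have hQ00 : Q 0 = ρ := by simp [hQdef]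
    have e1 : ∀ᶠ h in nhds (0:ℝ), Q h < 1 := by
      have h1 := hQc.continuousAt (x := 0)
      rw [ContinuousAt, hQ00] at h1
      exact h1.eventually_lt_const hρ1
    have hFca : ContinuousAt F 0 := by
      have hden0 : (1 : ℝ) - Q 0 ≠ 0 := by rw [hQ00]; intro hcon; linarith
      exact continuousAt_const.mul ((hQc.continuousAt.div
        (continuous_const.sub hQc).continuousAt hden0).sub continuousAt_const)
    have hF0 : F 0 = 0 := by simp [hFdef, hQ00]
    have e2 : ∀ᶠ h in nhds (0:ℝ), F h < t * r := by
      rw [ContinuousAt, hF0] at hFca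
      exact hFca.eventually_lt_const (by positivity)
    obtain ⟨h₁, h₁pos, hball⟩ := Metric.eventually_nhds_iff.1 (e1.and e2)
    refine ⟨h₁, h₁pos, ?_⟩
    intro h hh
    have hd : dist h 0 < h₁ := by
      rw [Real.dist_eq, sub_zero, abs_of_pos hh.1]; exact hh.2
    obtain ⟨hQ1, hFδ⟩ := hball hd
    have hmem : ∀ κ ∈ Set.Icc (κ₀ - t) (κ₀ + t), |κ| ≤ M := by
      intro κ hκ
      have h1 : |κ - κ₀| ≤ t := abs_le.2 ⟨by linarith [hκ.1], by linarith [hκ.2]⟩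
      have h2 := abs_add_le κ₀ (κ - κ₀)
      have h3 : κ₀ + (κ - κ₀) = κ := by ring
      rw [h3] at h2
      rw [hMdef]; linarith
    have hu : Summable (fun k : ℕ => C * M^2 * Q h ^ (k+1)) := by
      have h1 := summable_geometric_of_lt_one (hQ0 h).le hQ1
      exact Summable.mul_left _ (by simpa [pow_succ, mul_comm] using h1.mul_left (Q h))
    have hTU := tendstoUniformlyOn_tsum (s := Set.Icc (κ₀ - t) (κ₀ + t))
      (f := fun (k : ℕ) (κ : ℝ) => a (k + 1) *
          (Real.exp (-κ * ((k + 1) * h)) - 2 + Real.exp (κ * ((k + 1) * h)))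
            / (((k : ℝ) + 1) ^ 2 * h ^ 2)) hu
      (fun k κ hκ => by
        rw [Real.norm_eq_abs]; exact (key h hh.1 hQ1 κ (hmem κ hκ)).2.1 k)
    have hcontterm : ∀ k : ℕ, Continuous (fun κ : ℝ => a (k + 1) *
          (Real.exp (-κ * ((k + 1) * h)) - 2 + Real.exp (κ * ((k + 1) * h)))
            / (((k : ℝ) + 1) ^ 2 * h ^ 2)) := by
      intro k; fun_prop
    have hconts : ContinuousOn (fun κ : ℝ => g₀ - c * κ + ∑' k : ℕ, a (k + 1) *
          (Real.exp (-κ * ((k + 1) * h)) - 2 + Real.exp (κ * ((k + 1) * h)))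
            / (((k : ℝ) + 1) ^ 2 * h ^ 2)) (Set.Icc (κ₀ - t) (κ₀ + t)) := by
      apply ContinuousOn.add
      · exact (continuous_const.sub (continuous_const.mul continuous_id)).continuousOn
      · exact hTU.continuousOn (Filter.Eventually.of_forall fun T =>
          (continuous_finset_sum T fun k _ => hcontterm k).continuousOn).frequently
    obtain ⟨-, -, hba⟩ := key h hh.1 hQ1 (κ₀ - t) (hmem _ ⟨le_rfl, by linarith⟩)
    obtain ⟨-, -, hbb⟩ := key h hh.1 hQ1 (κ₀ + t) (hmem _ ⟨by linarith, le_rfl⟩)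
    have hG0a : g₀ - c * (κ₀ - t) + (κ₀ - t)^2 = t^2 + 2*r*t := by
      rw [hκ₀]; linear_combination hr2
    have hG0b : g₀ - c * (κ₀ + t) + (κ₀ + t)^2 = t^2 - 2*r*t := by
      rw [hκ₀]; linear_combination hr2
    have hba' := abs_le.1 hba
    have hbb' := abs_le.1 hbb
    have hsignA : 0 < g₀ - c * (κ₀ - t) + ∑' k : ℕ, a (k + 1) *
          (Real.exp (-(κ₀ - t) * ((k + 1) * h)) - 2 + Real.exp ((κ₀ - t) * ((k + 1) * h)))
            / (((k : ℝ) + 1) ^ 2 * h ^ 2) := by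
      nlinarith [hba'.1, hFδ, sq_nonneg t, mul_le_mul_of_nonneg_left htr ht0.le]
    have hsignB : g₀ - c * (κ₀ + t) + (∑' k : ℕ, a (k + 1) *
          (Real.exp (-(κ₀ + t) * ((k + 1) * h)) - 2 + Real.exp ((κ₀ + t) * ((k + 1) * h)))
            / (((k : ℝ) + 1) ^ 2 * h ^ 2)) < 0 := by
      nlinarith [hbb'.2, hFδ, mul_le_mul_of_nonneg_left htr ht0.le]
    have hivt := intermediate_value_Icc' (by linarith : κ₀ - t ≤ κ₀ + t) hconts
    have h0mem : (0:ℝ) ∈ Set.Icc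
        (g₀ - c * (κ₀ + t) + ∑' k : ℕ, a (k + 1) *
          (Real.exp (-(κ₀ + t) * ((k + 1) * h)) - 2 + Real.exp ((κ₀ + t) * ((k + 1) * h)))
            / (((k : ℝ) + 1) ^ 2 * h ^ 2))
        (g₀ - c * (κ₀ - t) + ∑' k : ℕ, a (k + 1) *
          (Real.exp (-(κ₀ - t) * ((k + 1) * h)) - 2 + Real.exp ((κ₀ - t) * ((k + 1) * h)))
            / (((k : ℝ) + 1) ^ 2 * h ^ 2)) := ⟨hsignB.le, hsignA.le⟩
    obtain ⟨κ, hκs, hκ0⟩ := hivt h0mem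
    exact ⟨κ, le_trans (abs_le.2 ⟨by linarith [hκs.1], by linarith [hκs.2]⟩) htε, hκ0⟩

  have hsel : ∀ h : ℝ, 0 < h → {κ : ℝ | G h κ = 0}.Nonempty →
      ∃ κ, G h κ = 0 ∧ |κ - κ₀| < sInf ((fun κ => |κ - κ₀|) '' {κ | G h κ = 0}) + h := by
    intro h hpos hne
    obtain ⟨y, hy1, hy2⟩ := Real.lt_sInf_add_pos (hne.image _) hpos
    obtain ⟨κ, hκ, rfl⟩ := hy1
    exact ⟨κ, hκ, hy2⟩
  set κf : ℝ → ℝ := fun h =>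
    if H : 0 < h ∧ {κ : ℝ | G h κ = 0}.Nonempty then (hsel h H.1 H.2).choose else κ₀
    with hκfdef
  have hκfspec : ∀ h : ℝ, 0 < h → {κ : ℝ | G h κ = 0}.Nonempty →
      G h (κf h) = 0 ∧ |κf h - κ₀| < sInf ((fun κ => |κ - κ₀|) '' {κ | G h κ = 0}) + h := by
    intro h h1 h2
    have H : 0 < h ∧ {κ : ℝ | G h κ = 0}.Nonempty := ⟨h1, h2⟩
    rw [hκfdef]; simp only [dif_pos H]
    exact (hsel h H.1 H.2).choose_spec
  have hbdd : ∀ h : ℝ, BddBelow ((fun κ => |κ - κ₀|) '' {κ : ℝ | G h κ = 0}) := by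
    intro h
    refine ⟨0, ?_⟩
    rintro y ⟨κ, -, rfl⟩
    exact abs_nonneg _
  obtain ⟨h₀, h₀pos, hcl0⟩ := claim r hr0
  refine ⟨p1, p2, p3, h₀, h₀pos, κf, ?_, ?_⟩
  · intro h hh
    obtain ⟨κ, -, hκ0⟩ := hcl0 h hh
    exact (hκfspec h hh.1 ⟨κ, hκ0⟩).1
  · rw [Metric.tendsto_nhdsWithin_nhds]
    intro ε hε
    obtain ⟨h₁, h₁pos, hcl⟩ := claim (ε/3) (by linarith)
    refine ⟨min h₁ (ε/3), lt_min h₁pos (by linarith), ?_⟩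
    intro h hmem hdist
    have hpos : 0 < h := hmem
    rw [Real.dist_eq, sub_zero, abs_of_pos hpos] at hdist
    obtain ⟨κs, hκd, hκz⟩ := hcl h ⟨hpos, hdist.trans_le (min_le_left _ _)⟩
    have hne : {κ : ℝ | G h κ = 0}.Nonempty := ⟨κs, hκz⟩
    have hDle : sInf ((fun κ => |κ - κ₀|) '' {κ : ℝ | G h κ = 0}) ≤ ε/3 :=
      le_trans (csInf_le (hbdd h) ⟨κs, hκz, rfl⟩) hκd
    obtain ⟨-, hlt⟩ := hκfspec h hpos hne
    rw [Real.dist_eq]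
    have hh3 : h < ε/3 := hdist.trans_le (min_le_right _ _)
    linarith
end
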